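/- For all y ∈ (0,1), Q(√y) ≥ 1/2 − (√y/((1−y)·√(2π)))·e^{−y/2}, where Q(t) = (1/√(2π))∫_t^∞ e^{−s²/2} ds is the Gaussian tail function. -/

import Mathlib

open Real MeasureTheory

/-- For y ∈ (0,1): Q(√y) ≥ 1/2 − (√y/((1−y)√(2π)))·e^{−y/2}, where
Q(t) = (1/√(2π)) ∫_t^∞ e^{−s²/2} ds is the Gaussian tail function. -/
theorem gaussian_Q_lower_bound (y : ℝ) (hy : y ∈ Set.Ioo (0 : ℝ) 1) :
    let Q : ℝ → ℝ := fun t =>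
      (1 / Real.sqrt (2 * π)) * ∫ s in Set.Ioi t, Real.exp (-s ^ 2 / 2)
    Q (Real.sqrt y) ≥
      1 / 2 - (Real.sqrt y / ((1 - y) * Real.sqrt (2 * π))) * Real.exp (-y / 2) := by
  intro Q
  obtain ⟨hy0, hy1⟩ := hy
  set t := Real.sqrt y with ht
  have ht0 : 0 ≤ t := Real.sqrt_nonneg y
  have hfeq : ∀ s : ℝ, Real.exp (-s ^ 2 / 2) = Real.exp (-(1/2 : ℝ) * s ^ 2) := by
    intro s; ring_nf
  have hint : Integrable (fun s : ℝ => Real.exp (-s ^ 2 / 2)) := by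
    simp only [hfeq]
    exact integrable_exp_neg_mul_sq (by norm_num)
  have hπ : 0 < Real.sqrt (2 * π) := Real.sqrt_pos.mpr (by positivity)
  -- value of the full half-line integral
  have hIoi0 : ∫ s in Set.Ioi (0 : ℝ), Real.exp (-s ^ 2 / 2) = Real.sqrt (2 * π) / 2 := by
    simp only [hfeq]
    rw [integral_gaussian_Ioi]
    rw [Real.sqrt_mul (by norm_num : (0:ℝ) ≤ 2)]
    norm_num
    ring
  -- split the integral
  have hsplit : (∫ s in Set.Ioc 0 t, Real.exp (-s ^ 2 / 2)) +
      (∫ s in Set.Ioi t, Real.exp (-s ^ 2 / 2)) = Real.sqrt (2 * π) / 2 := by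
    rw [← hIoi0, ← Set.Ioc_union_Ioi_eq_Ioi ht0]
    rw [setIntegral_union (Set.Ioc_disjoint_Ioi le_rfl) measurableSet_Ioi
      hint.integrableOn hint.integrableOn]
  -- bound the middle integral by t
  have hbound : (∫ s in Set.Ioc 0 t, Real.exp (-s ^ 2 / 2)) ≤ t := by
    have h1 : (∫ s in Set.Ioc 0 t, Real.exp (-s ^ 2 / 2)) ≤
        ∫ _ in Set.Ioc (0 : ℝ) t, (1 : ℝ) := by
      refine setIntegral_mono_on hint.integrableOn ((integrableOn_const_iff (C := (1 : ℝ))).mpr ?_)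
        measurableSet_Ioc ?_
      · right; simp [Real.volume_Ioc]
      · intro s _
        exact Real.exp_le_one_iff.mpr (by nlinarith [sq_nonneg s])
    calc (∫ s in Set.Ioc 0 t, Real.exp (-s ^ 2 / 2)) ≤ ∫ _ in Set.Ioc (0 : ℝ) t, (1 : ℝ) := h1
    _ = t := by simp [Real.volume_Ioc, ht0]
  -- key elementary inequality
  have hexp : 1 - y ≤ Real.exp (-y / 2) := by
    have := Real.add_one_le_exp (-y / 2)
    linarith
  have h1y : 0 < 1 - y := by linarith
  -- conclude
  have hQ : Q t = 1 / 2 - (∫ s in Set.Ioc 0 t, Real.exp (-s ^ 2 / 2)) / Real.sqrt (2 * π) := by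
    show (1 / Real.sqrt (2 * π)) * ∫ s in Set.Ioi t, Real.exp (-s ^ 2 / 2) = _
    have : (∫ s in Set.Ioi t, Real.exp (-s ^ 2 / 2)) =
        Real.sqrt (2 * π) / 2 - ∫ s in Set.Ioc 0 t, Real.exp (-s ^ 2 / 2) := by
      linarith
    rw [this]
    field_simp
  rw [ge_iff_le, hQ]
  have hkey : (∫ s in Set.Ioc 0 t, Real.exp (-s ^ 2 / 2)) ≤
      t * Real.exp (-y / 2) / (1 - y) := by
    have : t * (1 - y) ≤ t * Real.exp (-y / 2) := by
      exact mul_le_mul_of_nonneg_left hexp ht0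
    calc (∫ s in Set.Ioc 0 t, Real.exp (-s ^ 2 / 2)) ≤ t := hbound
    _ ≤ t * Real.exp (-y / 2) / (1 - y) := by
        rw [le_div_iff₀ h1y]; linarith
  have : (∫ s in Set.Ioc 0 t, Real.exp (-s ^ 2 / 2)) / Real.sqrt (2 * π) ≤
      (t / ((1 - y) * Real.sqrt (2 * π))) * Real.exp (-y / 2) := by
    rw [div_le_iff₀ hπ] at *
    have h2 : (t / ((1 - y) * Real.sqrt (2 * π))) * Real.exp (-y / 2) * Real.sqrt (2 * π)
        = t * Real.exp (-y / 2) / (1 - y) := by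
      field_simp
    rw [h2]
    exact hkey
  linarith
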